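/- A prime p can be written as p = a² + 6b² with integers a, b if and only if p ≡ 1 (mod 24) or p ≡ 7 (mod 24). -/

import Mathlib

lemma key24 (p : ℕ) (hm : p % 24 = 1 ∨ p % 24 = 7) (x y : ℤ)
    (h : (p : ℤ) = 2 * x ^ 2 + 3 * y ^ 2) : False := by
  have h24 : (p : ZMod 24) = 2 * (x : ZMod 24) ^ 2 + 3 * (y : ZMod 24) ^ 2 := by
    have := congrArg (Int.cast : ℤ → ZMod 24) h
    push_cast at this
    exact this
  have hd : ∀ u v : ZMod 24, 2 * u ^ 2 + 3 * v ^ 2 ≠ 1 ∧ 2 * u ^ 2 + 3 * v ^ 2 ≠ 7 := by decide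
  have hv : p % 24 = (p : ZMod 24).val := (ZMod.val_natCast 24 p).symm
  rcases hm with hm | hm <;> rw [hm] at hv
  · exact (hd x y).1 (by rw [← h24]; rw [show (p : ZMod 24) = ((p % 24 : ℕ) : ZMod 24) from (ZMod.natCast_mod p 24).symm, hm]; rfl)
  · exact (hd x y).2 (by rw [← h24]; rw [show (p : ZMod 24) = ((p % 24 : ℕ) : ZMod 24) from (ZMod.natCast_mod p 24).symm, hm]; rfl)

lemma isSq_neg_six (p : ℕ) (hp : p.Prime) (hm : p % 24 = 1 ∨ p % 24 = 7) :
    IsSquare (-6 : ZMod p) := by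
  haveI := Fact.mk hp
  have hp2 : p ≠ 2 := by rintro rfl; omega
  have hp3 : (3 : ℕ) ≠ 2 := by norm_num
  have hodd : p % 2 = 1 := by omega
  have hmod4 : p % 4 = 1 ∨ p % 4 = 3 := by omega
  have hmod8 : p % 8 = 1 ∨ p % 8 = 7 := by omega
  have hleg : legendreSym p (-6) = 1 := by
    have e1 : (-6 : ℤ) = -1 * 2 * 3 := by norm_num
    rw [e1, legendreSym.mul, legendreSym.mul, legendreSym.at_neg_one hp2,
      legendreSym.at_two hp2]
    have h3 : legendreSym p 3 = (-1 : ℤ) ^ (p / 2) * legendreSym 3 p := by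
      have := legendreSym.quadratic_reciprocity' (p := 3) (q := p) hp3 hp2
      simpa using this
    have h3p : legendreSym 3 (p : ℤ) = 1 := by
      rw [legendreSym.mod 3 (p : ℤ), show ((p:ℤ) % ((3:ℕ):ℤ)) = 1 by push_cast; omega]
      decide
    have h8 : ZMod.χ₈ (p : ZMod 8) = 1 := by
      rw [ZMod.χ₈_nat_eq_if_mod_eight]
      rcases hmod8 with h | h <;> simp [h, hodd]
    rw [h3, h3p, mul_one, ZMod.χ₄_nat_eq_if_mod_four, h8]
    rcases hmod4 with h | h
    · rw [ZMod.neg_one_pow_div_two_of_one_mod_four h]; simp [h, hodd]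
    · rw [ZMod.neg_one_pow_div_two_of_three_mod_four h]; simp [h, hodd]
  have hne : ((-6 : ℤ) : ZMod p) ≠ 0 := by
    rw [Ne, ZMod.intCast_zmod_eq_zero_iff_dvd]
    intro hdvd
    have h6 : (p : ℤ) ∣ 6 := dvd_neg.mp hdvd
    have h6' : p ∣ 6 := by exact_mod_cast h6
    have hge : 2 ≤ p := hp.two_le
    have hle : p ≤ 6 := Nat.le_of_dvd (by norm_num) h6'
    interval_cases p <;> omega
  have := (legendreSym.eq_one_iff p hne).mp hleg
  have hc : ((-6 : ℤ) : ZMod p) = (-6 : ZMod p) := by push_cast; ring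
  rwa [hc] at this

lemma fwd (p : ℕ) (hp : p.Prime) (a b : ℤ) (hab : (p : ℤ) = a ^ 2 + 6 * b ^ 2) :
    p % 24 = 1 ∨ p % 24 = 7 := by
  have h24 : (p : ZMod 24) = (a : ZMod 24) ^ 2 + 6 * (b : ZMod 24) ^ 2 := by
    have := congrArg (Int.cast : ℤ → ZMod 24) hab
    push_cast at this
    exact this
  have hd : ∀ u v : ZMod 24, u ^ 2 + 6 * v ^ 2 = 0 ∨ u ^ 2 + 6 * v ^ 2 = 1 ∨
      u ^ 2 + 6 * v ^ 2 = 4 ∨ u ^ 2 + 6 * v ^ 2 = 6 ∨ u ^ 2 + 6 * v ^ 2 = 7 ∨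
      u ^ 2 + 6 * v ^ 2 = 9 ∨ u ^ 2 + 6 * v ^ 2 = 10 ∨ u ^ 2 + 6 * v ^ 2 = 12 ∨
      u ^ 2 + 6 * v ^ 2 = 15 ∨ u ^ 2 + 6 * v ^ 2 = 16 ∨ u ^ 2 + 6 * v ^ 2 = 18 ∨
      u ^ 2 + 6 * v ^ 2 = 22 := by decide
  have hv : p % 24 = (p : ZMod 24).val := (ZMod.val_natCast 24 p).symm
  have h2 : p % 2 = 0 → p = 2 := fun h =>
    ((Nat.prime_dvd_prime_iff_eq Nat.prime_two hp).mp (Nat.dvd_of_mod_eq_zero h)).symm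
  have h3 : p % 3 = 0 → p = 3 := fun h =>
    ((Nat.prime_dvd_prime_iff_eq Nat.prime_three hp).mp (Nat.dvd_of_mod_eq_zero h)).symm
  rcases hd a b with h|h|h|h|h|h|h|h|h|h|h|h <;> rw [← h24] at h <;> rw [h] at hv <;>
    simp only [show (0:ZMod 24).val = 0 from rfl, show (1:ZMod 24).val = 1 from rfl,
      show (4:ZMod 24).val = 4 from rfl, show (6:ZMod 24).val = 6 from rfl,
      show (7:ZMod 24).val = 7 from rfl, show (9:ZMod 24).val = 9 from rfl,
      show (10:ZMod 24).val = 10 from rfl, show (12:ZMod 24).val = 12 from rfl,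
      show (15:ZMod 24).val = 15 from rfl, show (16:ZMod 24).val = 16 from rfl,
      show (18:ZMod 24).val = 18 from rfl, show (22:ZMod 24).val = 22 from rfl] at hv <;>
    first
      | omega
      | (have := h2 (by omega); omega)
      | (have := h3 (by omega); omega)

lemma thue (p : ℕ) (hp : p.Prime) (x : ℤ) :
    ∃ a b : ℤ, ¬(a = 0 ∧ b = 0) ∧ a ^ 2 < p ∧ b ^ 2 < p ∧ (p : ℤ) ∣ a - x * b := by
  haveI := Fact.mk hp
  obtain ⟨r, hr⟩ : ∃ r, r = p.sqrt := ⟨p.sqrt, rfl⟩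
  have hp2 := hp.two_le
  have hrp : r * r < p := by
    rcases Nat.lt_or_ge (r * r) p with h | h
    · exact h
    · exfalso
      have heq : r * r = p := le_antisymm (hr ▸ (by simpa [pow_two] using Nat.sqrt_le' p : p.sqrt * p.sqrt ≤ p)) h
      rcases hp.eq_one_or_self_of_dvd r ⟨r, heq.symm⟩ with h1 | h1
      · rw [h1] at heq; omega
      · rw [h1] at heq; nlinarith
  have hps : p < (r + 1) * (r + 1) := hr ▸ Nat.lt_succ_sqrt p
  have hcard : Fintype.card (ZMod p) < Fintype.card (Fin (r + 1) × Fin (r + 1)) := by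
    rw [ZMod.card, Fintype.card_prod, Fintype.card_fin]
    exact hps
  obtain ⟨u, v, huv, hfe⟩ := Fintype.exists_ne_map_eq_of_card_lt
    (fun ij : Fin (r + 1) × Fin (r + 1) =>
      (ij.1.val : ZMod p) - (x : ZMod p) * (ij.2.val : ZMod p)) hcard
  refine ⟨(u.1.val : ℤ) - (v.1.val : ℤ), (u.2.val : ℤ) - (v.2.val : ℤ), ?_, ?_, ?_, ?_⟩
  · rintro ⟨h1, h2⟩
    apply huv
    have e1 : u.1.val = v.1.val := by omega
    have e2 : u.2.val = v.2.val := by omega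
    ext
    · exact e1
    · exact e2
  · have h1 : u.1.val ≤ r := Nat.lt_succ_iff.mp u.1.isLt
    have h2 : v.1.val ≤ r := Nat.lt_succ_iff.mp v.1.isLt
    have hrr : (r : ℤ) * r < p := by exact_mod_cast hrp
    have hle : ((u.1.val : ℤ) - v.1.val) ≤ r ∧ -(r:ℤ) ≤ ((u.1.val : ℤ) - v.1.val) := by
      constructor <;> push_cast <;> omega
    nlinarith [hle.1, hle.2]
  · have h1 : u.2.val ≤ r := Nat.lt_succ_iff.mp u.2.isLt
    have h2 : v.2.val ≤ r := Nat.lt_succ_iff.mp v.2.isLt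
    have hrr : (r : ℤ) * r < p := by exact_mod_cast hrp
    have hle : ((u.2.val : ℤ) - v.2.val) ≤ r ∧ -(r:ℤ) ≤ ((u.2.val : ℤ) - v.2.val) := by
      constructor <;> push_cast <;> omega
    nlinarith [hle.1, hle.2]
  · have : ((((u.1.val : ℤ) - v.1.val) - x * ((u.2.val : ℤ) - v.2.val) : ℤ) : ZMod p) = 0 := by
      have h0 := sub_eq_zero.mpr hfe
      push_cast at h0 ⊢
      linear_combination h0
    exact (ZMod.intCast_zmod_eq_zero_iff_dvd _ p).mp this

lemma descend (p : ℕ) (hp : p.Prime) (hm : p % 24 = 1 ∨ p % 24 = 7) (a b : ℤ)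
    (hdvd : (p : ℤ) ∣ a ^ 2 + 6 * b ^ 2) (hpos : 0 < a ^ 2 + 6 * b ^ 2)
    (hlt : a ^ 2 + 6 * b ^ 2 < 7 * p) :
    ∃ c d : ℤ, (p : ℤ) = c ^ 2 + 6 * d ^ 2 := by
  obtain ⟨k, hk⟩ := hdvd
  have hppos : (0 : ℤ) < p := by exact_mod_cast hp.pos
  have hk1 : 1 ≤ k := by nlinarith
  have hk6 : k ≤ 6 := by nlinarith
  interval_cases k
  · exact ⟨a, b, by linarith⟩
  · exfalso
    have hev : Even a := by
      have : Even (a ^ 2) := ⟨(p : ℤ) - 3 * b ^ 2, by linarith⟩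
      exact (Int.even_pow.mp this).1
    obtain ⟨a₁, rfl⟩ := hev
    exact key24 p hm a₁ b (by ring_nf at hk ⊢; linarith [hk])
  · exfalso
    have h3a : (3 : ℤ) ∣ a := by
      have hd : (3 : ℤ) ∣ a ^ 2 := ⟨(p : ℤ) - 2 * b ^ 2, by linarith⟩
      exact Int.Prime.dvd_pow' (by norm_num) hd
    obtain ⟨a₁, rfl⟩ := h3a
    exact key24 p hm b a₁ (by ring_nf at hk ⊢; linarith [hk])
  · have hev : Even a := by
      have : Even (a ^ 2) := ⟨(p : ℤ) * 2 - 3 * b ^ 2, by linarith⟩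
      exact (Int.even_pow.mp this).1
    obtain ⟨a₁, rfl⟩ := hev
    have hevb : Even b := by
      have : Even (b ^ 2) := ⟨(p : ℤ) - a₁ ^ 2 - b ^ 2, by ring_nf at hk ⊢; linarith [hk]⟩
      exact (Int.even_pow.mp this).1
    obtain ⟨b₁, rfl⟩ := hevb
    exact ⟨a₁, b₁, by ring_nf at hk ⊢; linarith [hk]⟩
  · exfalso
    have h5 : (5 : ℤ) ∣ (a + 2 * b) * (a - 2 * b) := ⟨(p : ℤ) - 2 * b ^ 2, by linarith⟩
    rcases (Int.Prime.dvd_mul' (by norm_num) h5) with h | h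
    · obtain ⟨t, ht⟩ := h
      have ha' : a = 5 * t - 2 * b := by push_cast at ht; linarith
      subst ha'
      exact key24 p hm (t - b) t (by ring_nf at hk ⊢; linarith [hk])
    · obtain ⟨t, ht⟩ := h
      have ha' : a = 5 * t + 2 * b := by push_cast at ht; linarith
      subst ha'
      exact key24 p hm (t + b) t (by ring_nf at hk ⊢; linarith [hk])
  · have hev : Even a := by
      have : Even (a ^ 2) := ⟨(p : ℤ) * 3 - 3 * b ^ 2, by linarith⟩
      exact (Int.even_pow.mp this).1
    have h3a : (3 : ℤ) ∣ a := by
      have hd : (3 : ℤ) ∣ a ^ 2 := ⟨(p : ℤ) * 2 - 2 * b ^ 2, by linarith⟩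
      exact Int.Prime.dvd_pow' (by norm_num) hd
    have h6a : (6 : ℤ) ∣ a := by
      obtain ⟨a₁, rfl⟩ := hev
      obtain ⟨a₂, ha₂⟩ := h3a
      exact ⟨a₁ - a₂, by linarith⟩
    obtain ⟨a₂, rfl⟩ := h6a
    exact ⟨b, a₂, by ring_nf at hk ⊢; linarith [hk]⟩

theorem stmt_5 (p : ℕ) (hp : p.Prime) :
    (∃ a b : ℤ, (p : ℤ) = a ^ 2 + 6 * b ^ 2) ↔
    (p % 24 = 1 ∨ p % 24 = 7) := by
  constructor
  · rintro ⟨a, b, hab⟩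
    exact fwd p hp a b hab
  · intro hm
    haveI := Fact.mk hp
    obtain ⟨s, hs⟩ := isSq_neg_six p hp hm
    have hx6 : (p : ℤ) ∣ ((s.val : ℤ)) ^ 2 + 6 := by
      have h0 : ((((s.val : ℤ)) ^ 2 + 6 : ℤ) : ZMod p) = 0 := by
        push_cast
        rw [ZMod.natCast_val, ZMod.cast_id, pow_two, ← hs]
        ring
      exact (ZMod.intCast_zmod_eq_zero_iff_dvd _ p).mp h0
    obtain ⟨a, b, hab0, ha2, hb2, habd⟩ := thue p hp (s.val : ℤ)
    have hdvdN : (p : ℤ) ∣ a ^ 2 + 6 * b ^ 2 := by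
      have key : a ^ 2 + 6 * b ^ 2 =
          (a - (s.val : ℤ) * b) * (a + (s.val : ℤ) * b) + (((s.val : ℤ)) ^ 2 + 6) * b ^ 2 := by
        ring
      rw [key]
      exact dvd_add (habd.mul_right _) (hx6.mul_right _)
    have hNpos : 0 < a ^ 2 + 6 * b ^ 2 := by
      have hor : a ≠ 0 ∨ b ≠ 0 := by tauto
      rcases hor with h | h
      · nlinarith [sq_pos_of_ne_zero h, sq_nonneg b]
      · nlinarith [sq_pos_of_ne_zero h, sq_nonneg a]
    have hNlt : a ^ 2 + 6 * b ^ 2 < 7 * p := by linarith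
    exact descend p hp hm a b hdvdN hNpos hNlt
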